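/- Let e and f be regular expressions over α. If for every finite type X and every map h : α → (X → X → Prop) the relational interpretations of e and f coincide (ĥ_rel e = ĥ_rel f), then matches' e = matches' f. -/

import Mathlib

/-- Relational interpretation of regular expressions. -/
def rinterp {α X : Type*} (h : α → X → X → Prop) :
    RegularExpression α → X → X → Prop
  | .zero => fun _ _ => False
  | .epsilon => fun x y => x = y
  | .char a => h a
  | .plus e f => fun x y => rinterp h e x y ∨ rinterp h f x y
  | .comp e f => fun x z => ∃ y, rinterp h e x y ∧ rinterp h f y z
  | .star e => Relation.ReflTransGen (rinterp h e)

def path {α X : Type*} (h : α → X → X → Prop) : List α → X → X → Prop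
  | [] => fun x y => x = y
  | a :: u => fun x z => ∃ y, h a x y ∧ path h u y z

lemma path_append {α X : Type*} (h : α → X → X → Prop) (u v : List α) (x z : X) :
    path h (u ++ v) x z ↔ ∃ y, path h u x y ∧ path h v y z := by
  induction u generalizing x with
  | nil => simp [path]
  | cons a u ih =>
    show (∃ y, h a x y ∧ path h (u ++ v) y z) ↔ _
    simp only [path, ih]
    constructor
    · rintro ⟨y, hy, m, hm, hv⟩; exact ⟨m, ⟨y, hy, hm⟩, hv⟩
    · rintro ⟨m, ⟨y, hy, hm⟩, hv⟩; exact ⟨y, hy, m, hm, hv⟩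

lemma rinterp_iff {α X : Type*} (h : α → X → X → Prop) (e : RegularExpression α) (x y : X) :
    rinterp h e x y ↔ ∃ u ∈ e.matches', path h u x y := by
  induction e generalizing x y with
  | zero => simp [rinterp, RegularExpression.matches'_zero]
  | epsilon =>
    simp [rinterp, RegularExpression.matches'_epsilon, Language.mem_one, path]
  | char a =>
    show h a x y ↔ _
    constructor
    · intro hxy; exact ⟨[a], rfl, y, hxy, rfl⟩
    · rintro ⟨u, hu, hp⟩
      rw [RegularExpression.matches'_char] at hu; replace hu : u = [a] := hu
      subst hu
      obtain ⟨z, hz, hzz⟩ := hp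
      cases hzz; exact hz
  | plus e f ihe ihf =>
    simp only [rinterp, RegularExpression.matches'_add, Language.mem_add, ihe, ihf]
    constructor
    · rintro (⟨u, hu, hp⟩ | ⟨u, hu, hp⟩)
      exacts [⟨u, Or.inl hu, hp⟩, ⟨u, Or.inr hu, hp⟩]
    · rintro ⟨u, hu | hu, hp⟩
      exacts [Or.inl ⟨u, hu, hp⟩, Or.inr ⟨u, hu, hp⟩]
  | comp e f ihe ihf =>
    simp only [rinterp, RegularExpression.matches'_mul, Language.mem_mul]
    constructor
    · rintro ⟨m, he, hf⟩
      obtain ⟨u, hu, hpu⟩ := (ihe x m).1 he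
      obtain ⟨v, hv, hpv⟩ := (ihf m y).1 hf
      exact ⟨u ++ v, ⟨u, hu, v, hv, rfl⟩, (path_append h u v x y).2 ⟨m, hpu, hpv⟩⟩
    · rintro ⟨w, ⟨u, hu, v, hv, rfl⟩, hp⟩
      obtain ⟨m, hpu, hpv⟩ := (path_append h u v x y).1 hp
      exact ⟨m, (ihe x m).2 ⟨u, hu, hpu⟩, (ihf m y).2 ⟨v, hv, hpv⟩⟩
  | star e ihe =>
    simp only [rinterp, RegularExpression.matches'_star]
    constructor
    · intro hr
      induction hr with
      | refl => exact ⟨[], Language.nil_mem_kstar _, rfl⟩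
      | tail _ hstep ih =>
        rename_i b c _
        obtain ⟨u, hu, hpu⟩ := ih
        obtain ⟨v, hv, hpv⟩ := (ihe b c).1 hstep
        obtain ⟨L, hL, hLmem⟩ := Language.mem_kstar.1 hu
        refine ⟨u ++ v, Language.mem_kstar.2 ⟨L ++ [v], by simp [hL], ?_⟩,
          (path_append h u v x c).2 ⟨b, hpu, hpv⟩⟩
        intro w hw
        rcases List.mem_append.1 hw with hw | hw
        · exact hLmem w hw
        · simp at hw; subst hw; exact hv
    · rintro ⟨u, hu, hp⟩
      obtain ⟨L, rfl, hLmem⟩ := Language.mem_kstar.1 hu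
      clear hu
      induction L generalizing x with
      | nil => simp [path] at hp; subst hp; exact Relation.ReflTransGen.refl
      | cons v L ih =>
        simp only [List.flatten_cons] at hp
        obtain ⟨m, hpv, hpL⟩ := (path_append h v L.flatten x y).1 hp
        exact Relation.ReflTransGen.head ((ihe x m).2 ⟨v, hLmem v (by simp), hpv⟩)
          (ih m (fun w hw => hLmem w (by simp [hw])) hpL)

lemma path_spec {α : Type*} (w : List α) (u : List α) (i j : Fin (w.length+1)) :
    path (fun a (i j : Fin (w.length+1)) => (i:ℕ)+1 = (j:ℕ) ∧ w[(i:ℕ)]? = some a) u i j ↔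
      (j:ℕ) = (i:ℕ) + u.length ∧ (w.drop (i:ℕ)).take u.length = u := by
  induction u generalizing i with
  | nil =>
    simp only [path, List.length_nil, Nat.add_zero, List.take_zero, and_true, Fin.ext_iff]
    exact eq_comm
  | cons a u ih =>
    simp only [path]
    constructor
    · rintro ⟨y, ⟨hy1, hy2⟩, hp⟩
      obtain ⟨hj, ht⟩ := (ih y).1 hp
      have hi : (i:ℕ) < w.length := by
        rw [List.getElem?_eq_some_iff] at hy2
        exact hy2.1
      refine ⟨by simp [hj, ← hy1, List.length_cons]; omega, ?_⟩
      have hdrop : w.drop (i:ℕ) = w[(i:ℕ)] :: w.drop ((i:ℕ)+1) := (List.getElem_cons_drop hi).symm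
      rw [hdrop, List.length_cons, List.take_succ_cons]
      have hwa : w[(i:ℕ)] = a := by
        rw [List.getElem?_eq_some_iff] at hy2
        exact hy2.2
      rw [hwa, hy1, ht]
    · rintro ⟨hj, ht⟩
      have hjle : (j:ℕ) ≤ w.length := by omega
      have hi : (i:ℕ) < w.length := by
        rw [List.length_cons] at hj; omega
      have hdrop : w.drop (i:ℕ) = w[(i:ℕ)] :: w.drop ((i:ℕ)+1) := (List.getElem_cons_drop hi).symm
      rw [List.length_cons, hdrop, List.take_succ_cons, List.cons_eq_cons] at ht
      refine ⟨⟨(i:ℕ)+1, by omega⟩, ⟨rfl, ?_⟩, (ih _).2 ⟨by simp at hj ⊢; omega, ht.2⟩⟩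
      rw [List.getElem?_eq_some_iff]
      exact ⟨hi, ht.1⟩

lemma rinterp_ulift {α X : Type*} (h : α → X → X → Prop) (g : RegularExpression α)
    (x y : X) :
    rinterp (fun a (i j : ULift X) => h a i.down j.down) g ⟨x⟩ ⟨y⟩ ↔ rinterp h g x y := by
  induction g generalizing x y with
  | zero => simp [rinterp]
  | epsilon => simp [rinterp, ULift.ext_iff]
  | char a => simp [rinterp]
  | plus e f ihe ihf => simp only [rinterp, ihe, ihf]
  | comp e f ihe ihf =>
    simp only [rinterp]
    constructor
    · rintro ⟨⟨m⟩, h1, h2⟩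
      exact ⟨m, (ihe x m).1 h1, (ihf m y).1 h2⟩
    · rintro ⟨m, h1, h2⟩
      exact ⟨⟨m⟩, (ihe x m).2 h1, (ihf m y).2 h2⟩
  | star e ihe =>
    simp only [rinterp]
    constructor
    · intro hr
      have := Relation.ReflTransGen.lift (r := fun (i j : ULift X) => rinterp
          (fun a (i j : ULift X) => h a i.down j.down) e i j) ULift.down
        (fun a b hab => (ihe a.down b.down).1 (by cases a; cases b; exact hab)) _ _ hr
      exact this
    · intro hr
      have := Relation.ReflTransGen.lift (r := rinterp h e) (ULift.up)
        (fun a b hab => (ihe a b).2 hab) _ _ hr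
      exact this

/-- If the relational interpretations of `e` and `f` agree over every finite type, then
`e` and `f` are language equivalent. -/
theorem finite_relational_to_language {α : Type*} (e f : RegularExpression α)
    (hrel : ∀ (X : Type*) [Finite X] (h : α → X → X → Prop), rinterp h e = rinterp h f) :
    e.matches' = f.matches' := by
  ext w
  have key : ∀ g : RegularExpression α, w ∈ g.matches' ↔
      rinterp (fun a (i j : Fin (w.length+1)) => (i:ℕ)+1 = (j:ℕ) ∧ w[(i:ℕ)]? = some a) g
        ⟨0, by omega⟩ ⟨w.length, by omega⟩ := by
    intro g
    rw [rinterp_iff]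
    constructor
    · intro hw
      exact ⟨w, hw, (path_spec w w _ _).2 ⟨by simp, by simp⟩⟩
    · rintro ⟨u, hu, hp⟩
      obtain ⟨hlen, htake⟩ := (path_spec w u _ _).1 hp
      have hul : u.length = w.length := by simpa using hlen.symm
      have : u = w := by simpa [hul] using htake.symm
      rwa [this] at hu
  have key2 : ∀ g : RegularExpression α, w ∈ g.matches' ↔
      rinterp (fun a (i j : ULift (Fin (w.length+1))) =>
        (i.down:ℕ)+1 = (j.down:ℕ) ∧ w[(i.down:ℕ)]? = some a) g ⟨⟨0, by omega⟩⟩ ⟨⟨w.length, by omega⟩⟩ := by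
    intro g
    rw [key g]
    exact (rinterp_ulift _ g _ _).symm
  rw [key2 e, key2 f, hrel (ULift (Fin (w.length+1))) _]
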